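/- Let u_1,...,u_n be positive reals linearly independent over ℚ, H_1 = Σ_j u_j(x_j²+ξ_j²), and let R be homogeneous of degree 2N with the additional symmetry R(±x_1,...,±x_n, ±ξ_1,...,±ξ_n) = R(x,ξ) for each sign flip applied simultaneously to x_j and ξ_j. Then the unique solution G of {H_1,G} = R − H (with G spanned by off-diagonal monomials z^α z̄^β, α ≠ β) also has this symmetry. -/

import Mathlib

open MvPolynomial

def LinIndepQ {n : ℕ} (u : Fin n → ℝ) : Prop :=
  ∀ q : Fin n → ℚ, (∑ j, (q j : ℝ) * u j) = 0 → ∀ j, q j = 0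

noncomputable def LV {n : ℕ} (u : Fin n → ℝ)
    (P : MvPolynomial (Fin n ⊕ Fin n) ℂ) : MvPolynomial (Fin n ⊕ Fin n) ℂ :=
  C Complex.I * ∑ j, C (u j : ℂ) *
    (X (Sum.inl j) * pderiv (Sum.inl j) P - X (Sum.inr j) * pderiv (Sum.inr j) P)

def IsDiagExp {n : ℕ} (d : (Fin n ⊕ Fin n) →₀ ℕ) : Prop :=
  ∀ j, d (Sum.inl j) = d (Sum.inr j)

def IsOffDiagPoly {n : ℕ} (N : ℕ) (G : MvPolynomial (Fin n ⊕ Fin n) ℂ) : Prop :=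
  ∀ d ∈ G.support, (∑ v ∈ d.support, d v) = 2 * N ∧ ¬ IsDiagExp d

def IsDiagPoly {n : ℕ} (N : ℕ) (H : MvPolynomial (Fin n ⊕ Fin n) ℂ) : Prop :=
  ∀ d ∈ H.support, (∑ v ∈ d.support, d v) = 2 * N ∧ IsDiagExp d

/-- The sign flip `(x_j, ξ_j) ↦ (ε_j x_j, ε_j ξ_j)`, which in the complex
coordinates `z_j = x_j + iξ_j` sends `z_j ↦ ε_j z_j` and `z̄_j ↦ ε_j z̄_j`. -/
noncomputable def signFlip {n : ℕ} (ε : Fin n → ℝ) :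
    MvPolynomial (Fin n ⊕ Fin n) ℂ →ₐ[ℂ] MvPolynomial (Fin n ⊕ Fin n) ℂ :=
  aeval (Sum.elim (fun j => C (ε j : ℂ) * X (Sum.inl j))
                  (fun j => C (ε j : ℂ) * X (Sum.inr j)))


section A
variable {n : ℕ}

lemma X_mul_pderiv_monomial (v : Fin n ⊕ Fin n) (s : (Fin n ⊕ Fin n) →₀ ℕ) (a : ℂ) :
    X v * pderiv v (monomial s a) = monomial s ((s v : ℂ) * a) := by
  rw [pderiv_monomial]
  rcases Nat.eq_zero_or_pos (s v) with h | h
  · simp [h]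
  · have hX : (X v : MvPolynomial (Fin n ⊕ Fin n) ℂ) = monomial (Finsupp.single v 1) 1 := rfl
    have hs : Finsupp.single v 1 + (s - Finsupp.single v 1) = s := by
      ext w
      rcases eq_or_ne w v with rfl | hw
      · simp [Finsupp.single_apply]
        omega
      · simp [Finsupp.single_apply, Ne.symm hw]
    rw [hX, monomial_mul, hs, one_mul, mul_comm]

lemma coeff_X_mul_pderiv (v : Fin n ⊕ Fin n) (d : (Fin n ⊕ Fin n) →₀ ℕ)
    (P : MvPolynomial (Fin n ⊕ Fin n) ℂ) :
    coeff d (X v * pderiv v P) = (d v : ℂ) * coeff d P := by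
  induction P using MvPolynomial.induction_on' with
  | monomial s a =>
      rw [X_mul_pderiv_monomial, coeff_monomial, coeff_monomial]
      split
      · next h => subst h; ring
      · simp
  | add p q hp hq => rw [map_add, mul_add, coeff_add, hp, hq, coeff_add]; ring

lemma coeff_LV (u : Fin n → ℝ) (d : (Fin n ⊕ Fin n) →₀ ℕ)
    (P : MvPolynomial (Fin n ⊕ Fin n) ℂ) :
    coeff d (LV u P) =
      (Complex.I * ∑ j, (u j : ℂ) * ((d (Sum.inl j) : ℂ) - (d (Sum.inr j) : ℂ))) *
        coeff d P := by
  rw [LV, coeff_C_mul, coeff_sum]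
  have : ∀ j, coeff d (C (u j : ℂ) *
      (X (Sum.inl j) * pderiv (Sum.inl j) P - X (Sum.inr j) * pderiv (Sum.inr j) P))
      = (u j : ℂ) * ((d (Sum.inl j) : ℂ) - (d (Sum.inr j) : ℂ)) * coeff d P := by
    intro j
    rw [coeff_C_mul, coeff_sub, coeff_X_mul_pderiv, coeff_X_mul_pderiv]
    ring
  rw [Finset.sum_congr rfl fun j _ => this j, ← Finset.sum_mul]
  ring

noncomputable def flipSign (ε : Fin n → ℝ) (d : (Fin n ⊕ Fin n) →₀ ℕ) : ℂ :=
  d.prod fun v k => (Sum.elim (fun j => (ε j : ℂ)) (fun j => (ε j : ℂ)) v) ^ k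

lemma signFlip_monomial (ε : Fin n → ℝ) (s : (Fin n ⊕ Fin n) →₀ ℕ) (a : ℂ) :
    signFlip ε (monomial s a) = C (flipSign ε s) * monomial s a := by
  rw [signFlip, aeval_monomial]
  have h1 : (s.prod fun v k => (Sum.elim (fun j => C (ε j : ℂ) * X (Sum.inl j))
      (fun j => C (ε j : ℂ) * X (Sum.inr j)) v) ^ k)
      = s.prod fun v k =>
        C ((Sum.elim (fun j => (ε j : ℂ)) (fun j => (ε j : ℂ)) v) ^ k) *
          (X v : MvPolynomial (Fin n ⊕ Fin n) ℂ) ^ k :=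
    Finsupp.prod_congr fun v _ => by rcases v with j | j <;> simp [mul_pow]
  have h2 : (s.prod fun v k =>
      (C ((Sum.elim (fun j => (ε j : ℂ)) (fun j => (ε j : ℂ)) v) ^ k) :
        MvPolynomial (Fin n ⊕ Fin n) ℂ)) = C (flipSign ε s) := by
    rw [flipSign, Finsupp.prod, Finsupp.prod]
    exact (map_prod (C : ℂ →+* MvPolynomial (Fin n ⊕ Fin n) ℂ) _ _).symm
  rw [h1, Finsupp.prod_mul, h2, algebraMap_eq, monomial_eq]
  ring

lemma coeff_signFlip (ε : Fin n → ℝ) (d : (Fin n ⊕ Fin n) →₀ ℕ)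
    (P : MvPolynomial (Fin n ⊕ Fin n) ℂ) :
    coeff d (signFlip ε P) = flipSign ε d * coeff d P := by
  induction P using MvPolynomial.induction_on' with
  | monomial s a =>
      rw [signFlip_monomial, coeff_C_mul, coeff_monomial]
      split
      · next h => subst h; rfl
      · ring
  | add p q hp hq => rw [map_add, coeff_add, hp, hq, coeff_add]; ring

end A

theorem stmt8 {n N : ℕ} (u : Fin n → ℝ) (hpos : ∀ j, 0 < u j) (hind : LinIndepQ u)
    (R G H : MvPolynomial (Fin n ⊕ Fin n) ℂ)
    (hR : R.IsHomogeneous (2 * N))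
    (hsym : ∀ ε : Fin n → ℝ, (∀ j, ε j = 1 ∨ ε j = -1) → signFlip ε R = R)
    (hG : IsOffDiagPoly N G) (hH : IsDiagPoly N H)
    (heq : LV u G = R - H) :
    ∀ ε : Fin n → ℝ, (∀ j, ε j = 1 ∨ ε j = -1) → signFlip ε G = G := by
  intro ε hε
  apply MvPolynomial.ext
  intro d
  rw [coeff_signFlip]
  by_cases hdG : coeff d G = 0
  · rw [hdG, mul_zero]
  · have hdsup : d ∈ G.support := mem_support_iff.mpr hdG
    obtain ⟨hdeg, hoff⟩ := hG d hdsup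
    set lam : ℂ :=
      Complex.I * ∑ j, (u j : ℂ) * ((d (Sum.inl j) : ℂ) - (d (Sum.inr j) : ℂ)) with hlamdef
    have hlam : lam ≠ 0 := by
      intro h0
      apply hoff
      intro j
      have hsum : (∑ j, (u j : ℂ) * ((d (Sum.inl j) : ℂ) - (d (Sum.inr j) : ℂ))) = 0 := by
        rcases mul_eq_zero.mp (hlamdef ▸ h0) with h | h
        · exact absurd h Complex.I_ne_zero
        · exact h
      have hreal : (∑ j, u j * ((d (Sum.inl j) : ℝ) - (d (Sum.inr j) : ℝ))) = 0 := by
        have := hsum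
        push_cast at this
        exact_mod_cast this
      have := hind (fun j => (d (Sum.inl j) : ℚ) - (d (Sum.inr j) : ℚ)) ?_ j
      · have : ((d (Sum.inl j) : ℚ)) = (d (Sum.inr j) : ℚ) := by linarith [sub_eq_zero.mp this]
        exact_mod_cast this
      · rw [← hreal]
        refine Finset.sum_congr rfl fun j _ => ?_
        push_cast
        ring
    have hH0 : coeff d H = 0 := by
      by_contra h
      exact hoff (hH d (mem_support_iff.mpr h)).2
    have hRG : coeff d R = lam * coeff d G := by
      have h := congrArg (coeff d) heq
      rw [coeff_LV, coeff_sub, hH0, sub_zero] at h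
      exact h.symm
    have hs : flipSign ε d * coeff d R = coeff d R := by
      have h := congrArg (coeff d) (hsym ε hε)
      rwa [coeff_signFlip] at h
    have hR0 : coeff d R ≠ 0 := by
      rw [hRG]; exact mul_ne_zero hlam hdG
    have ht : flipSign ε d = 1 :=
      mul_right_cancel₀ hR0 (hs.trans (one_mul (coeff d R)).symm)
    rw [ht, one_mul]
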